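/- Let p ≥ 1, let M : ℝ^p → ℝ^p be an invertible linear map, let b ∈ ℝ^p, and let A, A_1, …, A_{p+1} be nonempty compact convex subsets of ℝ^p. Then A belongs to the pseudosimplex S_c[A_1,…,A_{p+1}] if and only if the image M(A) + b = {M v + b : v ∈ A} belongs to the pseudosimplex S_c[M(A_1)+b, …, M(A_{p+1})+b]. -/

import Mathlib

open scoped RealInnerProductSpace

/-- The support function `s_A(u) = sup_{v ∈ A} ⟪u, v⟫`. -/
noncomputable def suppFn {p : ℕ} (A : Set (EuclideanSpace ℝ (Fin p)))
    (u : EuclideanSpace ℝ (Fin p)) : ℝ :=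
  sSup ((fun v => ⟪u, v⟫) '' A)

/-- `A` belongs to the pseudosimplex `S_c[As 0, …, As p]`: `A` is a nonempty compact convex set
whose support function lies between the minimum and maximum of the support functions of the
generators in every unit direction. -/
def memPseudoSimplex {p : ℕ} (A : Set (EuclideanSpace ℝ (Fin p)))
    (As : Fin (p + 1) → Set (EuclideanSpace ℝ (Fin p))) : Prop :=
  A.Nonempty ∧ IsCompact A ∧ Convex ℝ A ∧
  ∀ u : EuclideanSpace ℝ (Fin p), ‖u‖ = 1 →
    Finset.univ.inf' Finset.univ_nonempty (fun i => suppFn (As i) u) ≤ suppFn A u ∧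
    suppFn A u ≤ Finset.univ.sup' Finset.univ_nonempty (fun i => suppFn (As i) u)

section Aux

variable {p : ℕ}

lemma suppFn_bddAbove (A : Set (EuclideanSpace ℝ (Fin p))) (hA : IsCompact A)
    (u : EuclideanSpace ℝ (Fin p)) : BddAbove ((fun v => ⟪u, v⟫) '' A) :=
  (hA.image (continuous_const.inner continuous_id)).bddAbove

/-- Support function of an affine image. -/
lemma suppFn_image (M : EuclideanSpace ℝ (Fin p) →ₗ[ℝ] EuclideanSpace ℝ (Fin p))
    (b : EuclideanSpace ℝ (Fin p)) (A : Set (EuclideanSpace ℝ (Fin p)))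
    (hAne : A.Nonempty) (hAc : IsCompact A) (u : EuclideanSpace ℝ (Fin p)) :
    suppFn ((fun v => M v + b) '' A) u =
      suppFn A ((ContinuousLinearMap.adjoint (LinearMap.toContinuousLinearMap M)) u) + ⟪u, b⟫ := by
  set w := (ContinuousLinearMap.adjoint (LinearMap.toContinuousLinearMap M)) u with hw
  unfold suppFn
  rw [Set.image_image]
  have h1 : (fun v => ⟪u, M v + b⟫) = (fun x => x + ⟪u, b⟫) ∘ (fun v => ⟪w, v⟫) := by
    funext v
    simp only [Function.comp_apply, inner_add_right, hw]
    rw [ContinuousLinearMap.adjoint_inner_left]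
    rfl
  rw [h1, Set.image_comp]
  exact ((OrderIso.addRight (⟪u, b⟫ : ℝ)).map_csSup' (hAne.image _)
    (suppFn_bddAbove A hAc w)).symm

/-- Positive homogeneity of the support function. -/
lemma suppFn_smul (A : Set (EuclideanSpace ℝ (Fin p))) (hAne : A.Nonempty) (hAc : IsCompact A)
    (t : ℝ) (ht : 0 < t) (w : EuclideanSpace ℝ (Fin p)) :
    suppFn A (t • w) = t * suppFn A w := by
  unfold suppFn
  have h1 : (fun v => ⟪t • w, v⟫) = (fun x => t * x) ∘ (fun v => ⟪w, v⟫) := by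
    funext v; exact real_inner_smul_left w v t
  rw [h1, Set.image_comp]
  exact ((OrderIso.mulLeft₀ t ht).map_csSup' (hAne.image _) (suppFn_bddAbove A hAc w)).symm

lemma inf'_affine (t d : ℝ) (ht : 0 ≤ t) (g : Fin (p + 1) → ℝ) :
    Finset.univ.inf' Finset.univ_nonempty (fun i => t * g i + d) =
      t * Finset.univ.inf' Finset.univ_nonempty g + d := by
  have hm : Monotone (fun x : ℝ => t * x + d) := fun a b hab => by
    dsimp only; nlinarith
  exact (Finset.apply_inf'_eq_inf'_comp _ (fun x : ℝ => t * x + d) fun x y => hm.map_min).symm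

lemma sup'_affine (t d : ℝ) (ht : 0 ≤ t) (g : Fin (p + 1) → ℝ) :
    Finset.univ.sup' Finset.univ_nonempty (fun i => t * g i + d) =
      t * Finset.univ.sup' Finset.univ_nonempty g + d := by
  have hm : Monotone (fun x : ℝ => t * x + d) := fun a b hab => by
    dsimp only; nlinarith
  exact (Finset.comp_sup'_eq_sup'_comp _ (fun x : ℝ => t * x + d) fun x y => hm.map_max).symm

/-- One direction of the support-condition transfer. -/
lemma cond_image (M : EuclideanSpace ℝ (Fin p) →ₗ[ℝ] EuclideanSpace ℝ (Fin p))
    (hM : Function.Bijective M) (b : EuclideanSpace ℝ (Fin p))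
    (A : Set (EuclideanSpace ℝ (Fin p))) (As : Fin (p + 1) → Set (EuclideanSpace ℝ (Fin p)))
    (hAne : A.Nonempty) (hAc : IsCompact A)
    (hne : ∀ i, (As i).Nonempty) (hc : ∀ i, IsCompact (As i))
    (hcond : ∀ u : EuclideanSpace ℝ (Fin p), ‖u‖ = 1 →
      Finset.univ.inf' Finset.univ_nonempty (fun i => suppFn (As i) u) ≤ suppFn A u ∧
      suppFn A u ≤ Finset.univ.sup' Finset.univ_nonempty (fun i => suppFn (As i) u)) :
    ∀ u : EuclideanSpace ℝ (Fin p), ‖u‖ = 1 →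
      Finset.univ.inf' Finset.univ_nonempty
        (fun i => suppFn ((fun v => M v + b) '' As i) u) ≤ suppFn ((fun v => M v + b) '' A) u ∧
      suppFn ((fun v => M v + b) '' A) u ≤
        Finset.univ.sup' Finset.univ_nonempty
          (fun i => suppFn ((fun v => M v + b) '' As i) u) := by
  intro u hu
  set w := (ContinuousLinearMap.adjoint (LinearMap.toContinuousLinearMap M)) u with hwdef
  have hw0 : w ≠ 0 := by
    intro h0
    have hinner : ∀ v, ⟪u, M v⟫ = 0 := by
      intro v
      have := ContinuousLinearMap.adjoint_inner_left
        (LinearMap.toContinuousLinearMap M) v u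
      rw [← hwdef, h0] at this
      simpa using this.symm
    obtain ⟨v, hv⟩ := hM.2 u
    have : ⟪u, u⟫ = 0 := by have h := hinner v; rw [hv] at h; exact h
    have hu0 : u = 0 := by simpa using inner_self_eq_zero.mp this
    rw [hu0] at hu; simp at hu
  set t : ℝ := ‖w‖ with htdef
  have ht : 0 < t := norm_pos_iff.mpr hw0
  set u' : EuclideanSpace ℝ (Fin p) := t⁻¹ • w with hu'def
  have hu' : ‖u'‖ = 1 := by
    rw [hu'def, norm_smul]
    simp [htdef, abs_of_pos (inv_pos.mpr ht), inv_mul_cancel₀ ht.ne', inv_mul_cancel₀ (norm_ne_zero_iff.mpr hw0)]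
  have hwu' : w = t • u' := by
    rw [hu'def, smul_smul, mul_inv_cancel₀ ht.ne', one_smul]
  have hS : ∀ (S : Set (EuclideanSpace ℝ (Fin p))), S.Nonempty → IsCompact S →
      suppFn ((fun v => M v + b) '' S) u = t * suppFn S u' + ⟪u, b⟫ := by
    intro S hSne hSc
    rw [suppFn_image M b S hSne hSc u, ← hwdef, hwu', suppFn_smul S hSne hSc t ht u']
  obtain ⟨h1, h2⟩ := hcond u' hu'
  constructor
  · rw [hS A hAne hAc]
    have : (fun i => suppFn ((fun v => M v + b) '' As i) u) =
        fun i => t * suppFn (As i) u' + ⟪u, b⟫ := by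
      funext i; exact hS (As i) (hne i) (hc i)
    rw [this, inf'_affine t _ ht.le]
    nlinarith
  · rw [hS A hAne hAc]
    have : (fun i => suppFn ((fun v => M v + b) '' As i) u) =
        fun i => t * suppFn (As i) u' + ⟪u, b⟫ := by
      funext i; exact hS (As i) (hne i) (hc i)
    rw [this, sup'_affine t _ ht.le]
    nlinarith

end Aux

/-- Affine equivariance of pseudosimplices: for an invertible linear map `M` and `b ∈ ℝ^p`,
`A ∈ S_c[A₁,…,A_{p+1}]` iff `M(A) + b ∈ S_c[M(A₁)+b, …, M(A_{p+1})+b]`. -/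
theorem stmt10 (p : ℕ) (hp : 1 ≤ p)
    (M : EuclideanSpace ℝ (Fin p) →ₗ[ℝ] EuclideanSpace ℝ (Fin p))
    (hM : Function.Bijective M) (b : EuclideanSpace ℝ (Fin p))
    (A : Set (EuclideanSpace ℝ (Fin p)))
    (As : Fin (p + 1) → Set (EuclideanSpace ℝ (Fin p)))
    (hAne : A.Nonempty) (hAc : IsCompact A) (hAv : Convex ℝ A)
    (hne : ∀ i, (As i).Nonempty) (hc : ∀ i, IsCompact (As i)) (hv : ∀ i, Convex ℝ (As i)) :
    memPseudoSimplex A As ↔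
      memPseudoSimplex ((fun v => M v + b) '' A) (fun i => (fun v => M v + b) '' As i) := by
  have hMc : Continuous fun v => M v + b :=
    (M.continuous_of_finiteDimensional).add continuous_const
  set E := LinearEquiv.ofBijective M hM with hE
  set N : EuclideanSpace ℝ (Fin p) →ₗ[ℝ] EuclideanSpace ℝ (Fin p) := E.symm.toLinearMap with hN
  have hNM : ∀ v, N (M v) = v := fun v => E.symm_apply_apply v
  have hNbij : Function.Bijective N := E.symm.bijective
  have himg : ∀ S : Set (EuclideanSpace ℝ (Fin p)),
      (fun v => N v + (-(N b))) '' ((fun v => M v + b) '' S) = S := by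
    intro S
    rw [Set.image_image]
    have : (fun v => N (M v + b) + -(N b)) = id := by
      funext v
      simp [map_add, hNM v]
    rw [this, Set.image_id]
  constructor
  · rintro ⟨-, -, -, hcond⟩
    refine ⟨hAne.image _, hAc.image hMc, ?_, ?_⟩
    · have heq : (fun v => M v + b) '' A = (fun x => b + x) '' (M '' A) := by
        rw [Set.image_image]; simp [add_comm]
      rw [heq]
      exact (hAv.linear_image M).translate b
    · exact cond_image M hM b A As hAne hAc hne hc hcond
  · rintro ⟨-, -, -, hcond⟩
    refine ⟨hAne, hAc, hAv, ?_⟩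
    have := cond_image N hNbij (-(N b)) ((fun v => M v + b) '' A)
      (fun i => (fun v => M v + b) '' As i) (hAne.image _) (hAc.image hMc)
      (fun i => (hne i).image _) (fun i => (hc i).image hMc) hcond
    simpa [himg] using this
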